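/- Let r > 1/2 and define φ(x) = ∫_{−∞}^x ⟨s⟩^{−2r} ds, where ⟨s⟩² = 1 + s². Then there exists C > 0 such that for all x, y ∈ ℝ, φ(y) − φ(x) = (y − x)/(⟨x⟩^r ⟨y⟩^r) + Q(x,y), where the remainder Q(x,y) satisfies: (i) |Q(x,y)| ≤ C |x−y|²/(⟨x⟩ + ⟨y⟩)^{2r+1} whenever |x−y| ≤ (1/2)(⟨x⟩ + ⟨y⟩); and (ii) |Q(x,y)| ≤ C + C |x−y|/(⟨x⟩^r ⟨y⟩^r) whenever |x−y| ≥ (1/2)(⟨x⟩ + ⟨y⟩). -/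

import Mathlib

open MeasureTheory Complex ComplexConjugate

noncomputable section

/-- Japanese bracket `⟨x⟩ = (1+x²)^{1/2}`. -/
def jap (x : ℝ) : ℝ := Real.sqrt (1 + x ^ 2)

/-- Fourier transform with the convention `û(ξ) = ∫ e^{-ixξ} u(x) dx`. -/
def FT (u : ℝ → ℂ) (ξ : ℝ) : ℂ := ∫ x : ℝ, Complex.exp (-(Complex.I * (x : ℂ) * (ξ : ℂ))) * u x

/-- Inverse Fourier transform `(1/2π) ∫ e^{ixξ} v(ξ) dξ`. -/
def FTinv (v : ℝ → ℂ) (x : ℝ) : ℂ :=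
  ((2 * Real.pi)⁻¹ : ℝ) • ∫ ξ : ℝ, Complex.exp (Complex.I * (x : ℂ) * (ξ : ℂ)) * v ξ

/-- The Fourier multiplier `|D|^α` with symbol `|ξ|^α`. -/
def fracD (α : ℝ) (u : ℝ → ℂ) : ℝ → ℂ :=
  FTinv (fun ξ => ((|ξ| ^ α : ℝ) : ℂ) * FT u ξ)

end


lemma jap_pos (x : ℝ) : 0 < jap x := Real.sqrt_pos.mpr (by positivity)

lemma jap_sq (x : ℝ) : jap x ^ 2 = 1 + x ^ 2 := Real.sq_sqrt (by positivity)

lemma one_le_jap (x : ℝ) : 1 ≤ jap x := by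
  nlinarith [jap_sq x, jap_pos x]

lemma abs_le_jap (x : ℝ) : |x| ≤ jap x := by
  have h := jap_sq x
  nlinarith [jap_pos x, abs_nonneg x, _root_.sq_abs x]

lemma jap_lip (x y : ℝ) : |jap x - jap y| ≤ |x - y| := by
  have h1 := jap_sq x
  have h2 := jap_sq y
  have h3 := jap_pos x
  have h4 := jap_pos y
  have key : |jap x - jap y| * (jap x + jap y) = |x - y| * |x + y| := by
    rw [← abs_of_pos (show (0:ℝ) < jap x + jap y by linarith), ← _root_.abs_mul, ← _root_.abs_mul]
    congr 1
    nlinarith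
  have h5 : |x + y| ≤ jap x + jap y := by
    calc |x + y| ≤ |x| + |y| := abs_add_le x y
    _ ≤ jap x + jap y := add_le_add (abs_le_jap x) (abs_le_jap y)
  nlinarith [abs_nonneg (x - y), abs_nonneg (x + y), abs_nonneg (jap x - jap y)]

lemma jap_rpow_eq (r x : ℝ) : jap x ^ (-(2 * r)) = ((1 + x ^ 2 : ℝ)) ^ (-r) := by
  rw [jap, Real.sqrt_eq_rpow, ← Real.rpow_mul (by positivity)]
  ring_nf

lemma hasDerivAt_aux (r s : ℝ) :
    HasDerivAt (fun t : ℝ => ((1 + t ^ 2 : ℝ)) ^ (-r))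
      ((2 * s) * (-r) * (1 + s ^ 2) ^ (-r - 1)) s := by
  have h : HasDerivAt (fun t : ℝ => (1 + t ^ 2 : ℝ)) (2 * s) s := by
    simpa using ((hasDerivAt_pow 2 s).const_add 1)
  have h2 := h.rpow_const (p := -r) (Or.inl (by positivity))
  simpa using h2

lemma mvt_aux (r : ℝ) (hr : 0 < r) (x y B : ℝ) (hB : 0 < B)
    (hlow : ∀ s ∈ Set.uIcc x y, B ≤ jap s) :
    ∀ a ∈ Set.uIcc x y, ∀ b ∈ Set.uIcc x y,
      |(1 + b ^ 2 : ℝ) ^ (-r) - (1 + a ^ 2) ^ (-r)|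
        ≤ 2 * r * B ^ (-(2 * r + 1)) * |b - a| := by
  intro a ha b hb
  have key := (convex_uIcc x y).norm_image_sub_le_of_norm_hasDerivWithin_le
    (f' := fun s => (2 * s) * (-r) * (1 + s ^ 2) ^ (-r - 1))
    (fun s _ => (hasDerivAt_aux r s).hasDerivWithinAt)
    (C := 2 * r * B ^ (-(2 * r + 1))) (fun s hs => ?_) ha hb
  · simpa [Real.norm_eq_abs] using key
  · have hjs := jap_pos s
    have h1 : ‖(2 * s) * (-r) * (1 + s ^ 2) ^ (-r - 1)‖
        = 2 * |s| * r * (1 + s ^ 2) ^ (-r - 1) := by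
      rw [Real.norm_eq_abs, _root_.abs_mul, _root_.abs_mul, abs_neg, abs_of_pos hr,
        abs_of_pos (show (0:ℝ) < (1 + s ^ 2) ^ (-r - 1) by positivity), _root_.abs_mul, _root_.abs_two]
    have h2 : (1 + s ^ 2 : ℝ) ^ (-r - 1) = jap s ^ (-(2 * r + 2)) := by
      rw [jap, Real.sqrt_eq_rpow, ← Real.rpow_mul (by positivity)]
      ring_nf
    have h4 : jap s * jap s ^ (-(2 * r + 2)) = jap s ^ (-(2 * r + 1)) := by
      nth_rewrite 1 [← Real.rpow_one (jap s)]
      rw [← Real.rpow_add hjs]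
      ring_nf
    have h5 : jap s ^ (-(2 * r + 1)) ≤ B ^ (-(2 * r + 1)) :=
      Real.rpow_le_rpow_of_nonpos hB (hlow s hs) (by linarith)
    have h3 : |s| ≤ jap s := abs_le_jap s
    rw [h1, h2]
    have hnn : (0:ℝ) ≤ jap s ^ (-(2 * r + 2)) := Real.rpow_nonneg hjs.le _
    calc 2 * |s| * r * jap s ^ (-(2 * r + 2))
        ≤ 2 * jap s * r * jap s ^ (-(2 * r + 2)) := by
          have := mul_le_mul_of_nonneg_right (mul_le_mul_of_nonneg_right
            (mul_le_mul_of_nonneg_left h3 (by norm_num : (0:ℝ) ≤ 2)) hr.le) hnn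
          linarith
      _ = 2 * r * (jap s * jap s ^ (-(2 * r + 2))) := by ring
      _ = 2 * r * jap s ^ (-(2 * r + 1)) := by rw [h4]
      _ ≤ 2 * r * B ^ (-(2 * r + 1)) := by nlinarith

lemma integrable_aux (r : ℝ) (hr : 1 / 2 < r) :
    Integrable (fun s : ℝ => ((1 + s ^ 2 : ℝ)) ^ (-r)) := by
  have h := integrable_rpow_neg_one_add_norm_sq (E := ℝ) (μ := volume)
    (r := 2 * r) (by simpa using (by linarith : (1:ℝ) < 2 * r))
  have he : -(2 * r) / 2 = -r := by ring
  rw [he] at h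
  simpa [Real.norm_eq_abs, _root_.sq_abs] using h

set_option maxHeartbeats 1000000 in
/-- decomposition `φ(y) − φ(x) = (y−x)/(⟨x⟩^r⟨y⟩^r) + Q(x,y)` with
quadratic/linear remainder bounds, where `φ(x) = ∫_{-∞}^x ⟨s⟩^{-2r} ds`. -/
theorem stmt_3 (r : ℝ) (hr : 1 / 2 < r) :
    ∃ C : ℝ, 0 < C ∧ ∀ x y : ℝ,
      ((|x - y| ≤ (1 / 2) * (jap x + jap y) →
        |((∫ s in Set.Iic y, jap s ^ (-(2 * r))) - (∫ s in Set.Iic x, jap s ^ (-(2 * r))))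
            - (y - x) / (jap x ^ r * jap y ^ r)|
          ≤ C * |x - y| ^ 2 / (jap x + jap y) ^ (2 * r + 1)) ∧
      ((1 / 2) * (jap x + jap y) ≤ |x - y| →
        |((∫ s in Set.Iic y, jap s ^ (-(2 * r))) - (∫ s in Set.Iic x, jap s ^ (-(2 * r))))
            - (y - x) / (jap x ^ r * jap y ^ r)|
          ≤ C + C * |x - y| / (jap x ^ r * jap y ^ r))) := by
  have hr0 : 0 < r := by linarith
  have hint := integrable_aux r hr
  set M := ∫ s : ℝ, ((1 + s ^ 2 : ℝ)) ^ (-r) with hMdef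
  have hMnn : 0 ≤ M := integral_nonneg fun s => by positivity
  refine ⟨M + 1 + 4 * r * 4 ^ (2 * r + 1), by positivity, fun x y => ?_⟩
  set C := M + 1 + 4 * r * 4 ^ (2 * r + 1) with hCdef
  have hux := jap_pos x
  have huy := jap_pos y
  have h1x := one_le_jap x
  have h1y := one_le_jap y
  set u := jap x with hu
  set v := jap y with hv
  have hIic : ∀ t : ℝ, IntegrableOn (fun s : ℝ => ((1 + s ^ 2 : ℝ)) ^ (-r)) (Set.Iic t) :=
    fun t => hint.integrableOn
  have hφ : (∫ s in Set.Iic y, jap s ^ (-(2 * r))) - (∫ s in Set.Iic x, jap s ^ (-(2 * r)))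
      = ∫ s in x..y, ((1 + s ^ 2 : ℝ)) ^ (-r) := by
    simp only [jap_rpow_eq]
    exact intervalIntegral.integral_Iic_sub_Iic (hIic x) (hIic y)
  have hg : (y - x) / (u ^ r * v ^ r) = (y - x) * (u * v) ^ (-r) := by
    rw [Real.rpow_neg (by positivity), Real.mul_rpow hux.le huy.le, div_eq_mul_inv]
  have hφx0 : 0 ≤ ∫ s in Set.Iic x, ((1 + s ^ 2 : ℝ)) ^ (-r) :=
    setIntegral_nonneg measurableSet_Iic fun s _ => by positivity
  have hφy0 : 0 ≤ ∫ s in Set.Iic y, ((1 + s ^ 2 : ℝ)) ^ (-r) :=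
    setIntegral_nonneg measurableSet_Iic fun s _ => by positivity
  have hφxM : (∫ s in Set.Iic x, ((1 + s ^ 2 : ℝ)) ^ (-r)) ≤ M :=
    setIntegral_le_integral hint (Filter.Eventually.of_forall fun s => by positivity)
  have hφyM : (∫ s in Set.Iic y, ((1 + s ^ 2 : ℝ)) ^ (-r)) ≤ M :=
    setIntegral_le_integral hint (Filter.Eventually.of_forall fun s => by positivity)
  constructor
  · -- case (i)
    intro hxy
    set A := u + v with hA
    have hA0 : 0 < A := by linarith
    have hQ : ((∫ s in Set.Iic y, jap s ^ (-(2 * r))) - (∫ s in Set.Iic x, jap s ^ (-(2 * r))))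
        - (y - x) / (u ^ r * v ^ r)
        = ∫ s in x..y, (((1 + s ^ 2 : ℝ)) ^ (-r) - (u * v) ^ (-r)) := by
      rw [hφ, hg, intervalIntegral.integral_sub hint.intervalIntegrable
        (intervalIntegrable_const), intervalIntegral.integral_const, smul_eq_mul]
    rw [hQ]
    have hlow : ∀ s ∈ Set.uIcc x y, A / 4 ≤ jap s := by
      intro s hs
      have hsx := jap_lip s x
      have hsy := jap_lip s y
      have hsum : |s - x| + |s - y| = |x - y| := by
        rcases le_total x y with h | h
        · rw [Set.uIcc_of_le h] at hs
          rw [_root_.abs_of_nonneg (by linarith [hs.1]), _root_.abs_of_nonpos (by linarith [hs.2]),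
            _root_.abs_of_nonpos (by linarith)]
          ring
        · rw [Set.uIcc_of_ge h] at hs
          rw [_root_.abs_of_nonpos (by linarith [hs.2]), _root_.abs_of_nonneg (by linarith [hs.1]),
            _root_.abs_of_nonneg (by linarith)]
          ring
      have h1 := (abs_le.mp hsx).1
      have h2 := (abs_le.mp hsy).1
      rw [abs_sub_comm s x] at hsx
      rw [abs_sub_comm s y] at hsy
      have h1' := (abs_le.mp hsx).1
      have h2' := (abs_le.mp hsy).1
      linarith
    set K := 2 * r * (A / 4) ^ (-(2 * r + 1)) with hK
    have hKnn : 0 ≤ K := by positivity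
    have hmvt := mvt_aux r hr0 x y (A / 4) (by linarith) hlow
    have hmemx : x ∈ Set.uIcc x y := Set.left_mem_uIcc
    have hmemy : y ∈ Set.uIcc x y := Set.right_mem_uIcc
    have hex : (1 + x ^ 2 : ℝ) ^ (-r) = (u * u) ^ (-r) := by rw [← jap_sq x, pow_two]
    have hey : (1 + y ^ 2 : ℝ) ^ (-r) = (v * v) ^ (-r) := by rw [← jap_sq y, pow_two]
    have hbet : |(1 + x ^ 2 : ℝ) ^ (-r) - (u * v) ^ (-r)|
        ≤ |(1 + x ^ 2 : ℝ) ^ (-r) - (1 + y ^ 2) ^ (-r)| := by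
      rw [hex, hey]
      rcases le_total u v with h | h
      · have g1 : ((u * v : ℝ)) ^ (-r) ≤ (u * u) ^ (-r) :=
          Real.rpow_le_rpow_of_nonpos (by positivity) (by nlinarith) (by linarith)
        have g2 : ((v * v : ℝ)) ^ (-r) ≤ (u * v) ^ (-r) :=
          Real.rpow_le_rpow_of_nonpos (by positivity) (by nlinarith) (by linarith)
        rw [_root_.abs_of_nonneg (by linarith), _root_.abs_of_nonneg (by linarith)]
        linarith
      · have g1 : ((u * u : ℝ)) ^ (-r) ≤ (u * v) ^ (-r) :=
          Real.rpow_le_rpow_of_nonpos (by positivity) (by nlinarith) (by linarith)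
        have g2 : ((u * v : ℝ)) ^ (-r) ≤ (v * v) ^ (-r) :=
          Real.rpow_le_rpow_of_nonpos (by positivity) (by nlinarith) (by linarith)
        rw [_root_.abs_of_nonpos (by linarith), _root_.abs_of_nonpos (by linarith)]
        linarith
    have he2 := hmvt y hmemy x hmemx
    have hpt : ∀ s ∈ Set.uIoc x y,
        ‖((1 + s ^ 2 : ℝ)) ^ (-r) - (u * v) ^ (-r)‖ ≤ 2 * K * |x - y| := by
      intro s hs
      have hs' : s ∈ Set.uIcc x y := Set.uIoc_subset_uIcc hs
      have e1 := hmvt x hmemx s hs'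
      have hsx : |s - x| ≤ |x - y| := by
        rcases le_total x y with h | h
        · rw [Set.uIcc_of_le h] at hs'
          rw [_root_.abs_of_nonneg (by linarith [hs'.1]), _root_.abs_of_nonpos (by linarith)]
          linarith [hs'.2]
        · rw [Set.uIcc_of_ge h] at hs'
          rw [_root_.abs_of_nonpos (by linarith [hs'.2]), _root_.abs_of_nonneg (by linarith)]
          linarith [hs'.1]
      rw [Real.norm_eq_abs]
      calc |(1 + s ^ 2 : ℝ) ^ (-r) - (u * v) ^ (-r)|
          ≤ |(1 + s ^ 2 : ℝ) ^ (-r) - (1 + x ^ 2) ^ (-r)|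
            + |(1 + x ^ 2 : ℝ) ^ (-r) - (u * v) ^ (-r)| := _root_.abs_sub_le _ _ _
        _ ≤ K * |s - x| + |(1 + x ^ 2 : ℝ) ^ (-r) - (1 + y ^ 2) ^ (-r)| :=
            add_le_add e1 hbet
        _ ≤ K * |x - y| + K * |x - y| := by
            refine add_le_add (mul_le_mul_of_nonneg_left hsx hKnn) he2
        _ = 2 * K * |x - y| := by ring
    have hnorm := intervalIntegral.norm_integral_le_of_norm_le_const hpt
    rw [Real.norm_eq_abs] at hnorm
    have hA4 : ((A / 4 : ℝ)) ^ (-(2 * r + 1)) * A ^ (2 * r + 1) = 4 ^ (2 * r + 1) := by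
      rw [Real.rpow_neg (by positivity), Real.div_rpow hA0.le (by norm_num)]
      have h1 : (A : ℝ) ^ (2 * r + 1) ≠ 0 := by positivity
      have h2 : (4 : ℝ) ^ (2 * r + 1) ≠ 0 := by positivity
      field_simp
    rw [le_div_iff₀ (by positivity : (0:ℝ) < A ^ (2 * r + 1))]
    calc |∫ s in x..y, (((1 + s ^ 2 : ℝ)) ^ (-r) - (u * v) ^ (-r))| * A ^ (2 * r + 1)
        ≤ (2 * K * |x - y| * |y - x|) * A ^ (2 * r + 1) :=
          mul_le_mul_of_nonneg_right hnorm (by positivity)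
      _ = 4 * r * (((A / 4) ^ (-(2 * r + 1))) * A ^ (2 * r + 1)) * (|x - y| * |y - x|) := by
          rw [hK]; ring
      _ = 4 * r * 4 ^ (2 * r + 1) * |x - y| ^ 2 := by
          rw [hA4, abs_sub_comm y x]; ring
      _ ≤ C * |x - y| ^ 2 := by
          refine mul_le_mul_of_nonneg_right ?_ (by positivity)
          rw [hCdef]; linarith
  · -- case (ii)
    intro hxy
    rw [hg]
    have habs : |((∫ s in Set.Iic y, jap s ^ (-(2 * r))) - (∫ s in Set.Iic x, jap s ^ (-(2 * r))))
        - (y - x) * (u * v) ^ (-r)| ≤ M + |x - y| * (u * v) ^ (-r) := by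
      simp only [jap_rpow_eq]
      have h1 : |(∫ s in Set.Iic y, ((1 + s ^ 2 : ℝ)) ^ (-r))
          - (∫ s in Set.Iic x, ((1 + s ^ 2 : ℝ)) ^ (-r))| ≤ M :=
        abs_le.mpr ⟨by linarith, by linarith⟩
      have h2 : |(y - x) * (u * v) ^ (-r)| = |x - y| * (u * v) ^ (-r) := by
        rw [_root_.abs_mul, _root_.abs_of_nonneg (by positivity : (0:ℝ) ≤ ((u * v : ℝ)) ^ (-r)),
          abs_sub_comm y x]
      calc |((∫ s in Set.Iic y, ((1 + s ^ 2 : ℝ)) ^ (-r))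
            - (∫ s in Set.Iic x, ((1 + s ^ 2 : ℝ)) ^ (-r))) - (y - x) * (u * v) ^ (-r)|
          ≤ |(∫ s in Set.Iic y, ((1 + s ^ 2 : ℝ)) ^ (-r))
            - (∫ s in Set.Iic x, ((1 + s ^ 2 : ℝ)) ^ (-r))| + |(y - x) * (u * v) ^ (-r)| :=
            abs_sub _ _
        _ ≤ M + |x - y| * (u * v) ^ (-r) := by rw [h2]; exact add_le_add h1 le_rfl
    have hgabs : C * |x - y| / (u ^ r * v ^ r) = C * (|x - y| * (u * v) ^ (-r)) := by
      rw [Real.rpow_neg (by positivity), Real.mul_rpow hux.le huy.le, div_eq_mul_inv]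
      ring
    rw [hgabs]
    have ht : 0 ≤ |x - y| * (u * v) ^ (-r) := by positivity
    have hC1 : 1 ≤ C := by
      have : (0:ℝ) ≤ 4 * r * 4 ^ (2 * r + 1) := by positivity
      rw [hCdef]; linarith
    have hMC : M ≤ C := by
      have : (0:ℝ) ≤ 4 * r * 4 ^ (2 * r + 1) := by positivity
      rw [hCdef]; linarith
    nlinarith [habs]
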